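/- arXiv:math/0008117 — 2 statements merged into one kernel-verified Lean document; each statement's English description precedes it below -/
import Mathlib

section
/- Let 𝒞 = (C, G, δ) be a crossed module of groupoids over X, let s and t be free derivations on 𝒞, and let g = Δ(t). Define (s*t)₀(x) = s₀(g₀(x)) + t₀(x) and (s*t)₁(a) = t₁(a) + (s₁(g₁(a)))^{t₀(β(a))}. Then s*t is again a free derivation on 𝒞; in particular (s*t)₁(a+b) = ((s*t)₁(a))^b + (s*t)₁(b) whenever a + b is defined in G. -/
open CategoryTheory

/-- A crossed module of groupoids `(C, G, δ)` over the object type `X`.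
The groupoid `G` is encoded by a `Groupoid` structure on `X` (arrows `x ⟶ y`,
composition `a ≫ b` corresponding to the additive composition `a + b` of the paper,
with source `α` and target `β` built into the typing).
`C` is the totally intransitive groupoid, i.e. a family of groups `C x`
(written multiplicatively; the paper writes them additively). -/
structure XMod (X : Type*) [Groupoid X] where
  /-- the family of groups `C x` -/
  C : X → Type*
  grp : ∀ x : X, Group (C x)
  /-- the right action `c ^ a` of `G` on `C` -/
  act : ∀ {x y : X}, C x → (x ⟶ y) → C y
  act_mul : ∀ {x y : X} (c c' : C x) (a : x ⟶ y), act (c * c') a = act c a * act c' a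
  act_comp : ∀ {x y z : X} (c : C x) (a : x ⟶ y) (b : y ⟶ z), act c (a ≫ b) = act (act c a) b
  act_id : ∀ {x : X} (c : C x), act c (𝟙 x) = c
  /-- the boundary `δ : C x → G(x,x)` -/
  δ : ∀ {x : X}, C x → (x ⟶ x)
  δ_mul : ∀ {x : X} (c c' : C x), δ (c * c') = δ c ≫ δ c'
  δ_act : ∀ {x y : X} (c : C x) (a : x ⟶ y), δ (act c a) = Groupoid.inv a ≫ δ c ≫ a
  peiffer : ∀ {x : X} (c c' : C x), act c (δ c') = c'⁻¹ * c * c'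

attribute [instance] XMod.grp

theorem XMod.act_one {X : Type*} [Groupoid X] {𝒞 : XMod X} {x y : X} (a : x ⟶ y) :
    𝒞.act (1 : 𝒞.C x) a = 1 := by
  have h := 𝒞.act_mul (1 : 𝒞.C x) 1 a
  rw [mul_one] at h
  exact left_eq_mul.mp h

/-- A free derivation `s = (s₀, s₁)` on the crossed module `𝒞`:
`s₀ : X → G` with `β (s₀ x) = x` (so `s₀ x : f₀ x ⟶ x`, where `f₀ x = α (s₀ x)`),
and `s₁ : G → C` with `s₁ a ∈ C (β a)` and `s₁ (a + b) = (s₁ a) ^ b + s₁ b`. -/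
structure FreeDer {X : Type*} [Groupoid X] (𝒞 : XMod X) where
  f₀ : X → X
  s₀ : ∀ x : X, f₀ x ⟶ x
  s₁ : ∀ {x y : X}, (x ⟶ y) → 𝒞.C y
  s₁_comp : ∀ (x y z : X) (a : x ⟶ y) (b : y ⟶ z),
    s₁ (a ≫ b) = 𝒞.act (s₁ a) b * s₁ b

namespace FreeDer

variable {X : Type*} [Groupoid X] {𝒞 : XMod X}

/-- the object part `f₀` of the associated endomorphism `Δ s` is `s.f₀`;
this is its arrow part `f₁`:  `f₁ a = s₀ (α a) + a + δ (s₁ a) - s₀ (β a)`. -/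
def Δ₁ (s : FreeDer 𝒞) {x y : X} (a : x ⟶ y) : s.f₀ x ⟶ s.f₀ y :=
  s.s₀ x ≫ a ≫ 𝒞.δ (s.s₁ a) ≫ Groupoid.inv (s.s₀ y)

/-- the `C`-part `f₂` of the associated endomorphism `Δ s`:
`f₂ c = (c * s₁ (δ c)) ^ (- s₀ (β c))`. -/
def Δ₂ (s : FreeDer 𝒞) {x : X} (c : 𝒞.C x) : 𝒞.C (s.f₀ x) :=
  𝒞.act (c * s.s₁ (𝒞.δ c)) (Groupoid.inv (s.s₀ x))

/-- the `s₁`-component of the product `s * t` of free derivations: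
`(s*t)₁ a = t₁ a + (s₁ (g₁ a)) ^ (t₀ (β a))` where `g = Δ t`. -/
def mulS₁ (s t : FreeDer 𝒞) {x y : X} (a : x ⟶ y) : 𝒞.C y :=
  t.s₁ a * 𝒞.act (s.s₁ (t.Δ₁ a)) (t.s₀ y)

end FreeDer


lemma FreeDer.Δ₁_comp {X : Type*} [Groupoid X] {𝒞 : XMod X} (t : FreeDer 𝒞)
    {x y z : X} (a : x ⟶ y) (b : y ⟶ z) :
    t.Δ₁ (a ≫ b) = t.Δ₁ a ≫ t.Δ₁ b := by
  unfold FreeDer.Δ₁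
  rw [t.s₁_comp, 𝒞.δ_mul, 𝒞.δ_act]
  simp [Category.assoc]

/-- Let `𝒞` be a crossed module of groupoids, `s, t` free derivations
on `𝒞` and `g = Δ t`.  Define `(s*t)₀ x = s₀ (g₀ x) + t₀ x` (in the typed setting this
is the composite `s₀ (g₀ x) ≫ t₀ x : s.f₀ (t.f₀ x) ⟶ x`, so that `β ((s*t)₀ x) = x`
automatically) and `(s*t)₁ a = t₁ a + (s₁ (g₁ a)) ^ (t₀ (β a))`.
Then `s*t` is again a free derivation on `𝒞`; in particular
`(s*t)₁ (a + b) = ((s*t)₁ a) ^ b + (s*t)₁ b` whenever `a + b` is defined. -/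
theorem mul_is_freeDerivation {X : Type*} [Groupoid X] {𝒞 : XMod X}
    (s t : FreeDer 𝒞) :
    ∀ (x y z : X) (a : x ⟶ y) (b : y ⟶ z),
      s.mulS₁ t (a ≫ b) = 𝒞.act (s.mulS₁ t a) b * s.mulS₁ t b := by
  intro x y z a b
  unfold FreeDer.mulS₁
  rw [t.s₁_comp, t.Δ₁_comp, s.s₁_comp, 𝒞.act_mul, ← 𝒞.act_comp]
  have h1 : t.Δ₁ b ≫ t.s₀ z = t.s₀ y ≫ b ≫ 𝒞.δ (t.s₁ b) := by
    unfold FreeDer.Δ₁; simp [Category.assoc]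
  rw [h1, 𝒞.act_comp, 𝒞.act_comp, 𝒞.peiffer, 𝒞.act_mul]
  group
end

section
/- Let 𝒜 = (A₂, A₁, δ) be a braided regular crossed module with group of objects A₀ (identity e), and let K = {a ∈ A₁ : β(a) = e} with group operation a·b = b + (a.α(b)). Then the formula c!a = (c.α(a))^a, for c ∈ A₂(e) and a ∈ K, defines a right action of the group K on the group A₂(e) by group automorphisms extending the action of A₁(e) ⊆ K; the restriction δ : A₂(e) → K is K-equivariant; for all c, c' ∈ A₂(e) one has c!δ(c') = -c' + c + c'; and hence δ : A₂(e) → K is a crossed module of groups. -/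
open CategoryTheory

/-- A braided regular crossed module `𝒜 = (A₂, A₁, δ)`: a crossed module of
groupoids whose object set `A₀ = X` is a group (identity `e = 1`), together with
commuting left and right actions of `A₀` on `A₁` and on `A₂` (written `p.a`, `a.p`,
`p.c`, `c.p`; here `sL p a`, `sR a p`, `sL₂ p c`, `sR₂ c p`) by groupoid
automorphisms, compatible with `δ` and the crossed-module action, and a braiding
`{a, b} ∈ A₂ ((β a) * (β b))`.  The canonical identifications of objects coming from
the group laws of `A₀` are implemented by `eqToHom` (on `A₂` by transporting along
the identity arrow `𝒞.act _ (eqToHom _)`). -/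
structure Braided (X : Type*) [Groupoid X] [Group X] (𝒞 : XMod X) where
  sL : ∀ (p : X) {x y : X}, (x ⟶ y) → ((p * x) ⟶ (p * y))
  sR : ∀ {x y : X}, (x ⟶ y) → ∀ p : X, ((x * p) ⟶ (y * p))
  sL₂ : ∀ (p : X) {x : X}, 𝒞.C x → 𝒞.C (p * x)
  sR₂ : ∀ {x : X}, 𝒞.C x → ∀ p : X, 𝒞.C (x * p)
  -- the actions are actions of the group `A₀`:
  sL_one : ∀ (x y : X) (a : x ⟶ y),
    sL 1 a = eqToHom (one_mul x) ≫ a ≫ eqToHom (one_mul y).symm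
  sL_mul : ∀ (p q x y : X) (a : x ⟶ y),
    sL (p * q) a = eqToHom (mul_assoc p q x) ≫ sL p (sL q a) ≫ eqToHom (mul_assoc p q y).symm
  sR_one : ∀ (x y : X) (a : x ⟶ y),
    sR a 1 = eqToHom (mul_one x) ≫ a ≫ eqToHom (mul_one y).symm
  sR_mul : ∀ (p q x y : X) (a : x ⟶ y),
    sR a (p * q) = eqToHom (mul_assoc x p q).symm ≫ sR (sR a p) q ≫ eqToHom (mul_assoc y p q)
  sL₂_one : ∀ (x : X) (c : 𝒞.C x), sL₂ 1 c = 𝒞.act c (eqToHom (one_mul x).symm)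
  sL₂_mulA : ∀ (p q x : X) (c : 𝒞.C x),
    sL₂ (p * q) c = 𝒞.act (sL₂ p (sL₂ q c)) (eqToHom (mul_assoc p q x).symm)
  sR₂_one : ∀ (x : X) (c : 𝒞.C x), sR₂ c 1 = 𝒞.act c (eqToHom (mul_one x).symm)
  sR₂_mulA : ∀ (p q x : X) (c : 𝒞.C x),
    sR₂ c (p * q) = 𝒞.act (sR₂ (sR₂ c p) q) (eqToHom (mul_assoc x p q))
  -- the left and right actions commute:
  sLR : ∀ (p q x y : X) (a : x ⟶ y),
    sR (sL p a) q = eqToHom (mul_assoc p x q) ≫ sL p (sR a q) ≫ eqToHom (mul_assoc p y q).symm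
  sLR₂ : ∀ (p q x : X) (c : 𝒞.C x),
    sR₂ (sL₂ p c) q = 𝒞.act (sL₂ p (sR₂ c q)) (eqToHom (mul_assoc p x q).symm)
  -- each element of `A₀` acts by automorphisms of the groupoid `A₁` and of `A₂`:
  sL_comp : ∀ (p x y z : X) (a : x ⟶ y) (b : y ⟶ z), sL p (a ≫ b) = sL p a ≫ sL p b
  sL_id : ∀ (p x : X), sL p (𝟙 x) = 𝟙 (p * x)
  sR_comp : ∀ (p x y z : X) (a : x ⟶ y) (b : y ⟶ z), sR (a ≫ b) p = sR a p ≫ sR b p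
  sR_id : ∀ (p x : X), sR (𝟙 x) p = 𝟙 (x * p)
  sL₂_mul : ∀ (p x : X) (c c' : 𝒞.C x), sL₂ p (c * c') = sL₂ p c * sL₂ p c'
  sR₂_mul : ∀ (p x : X) (c c' : 𝒞.C x), sR₂ (c * c') p = sR₂ c p * sR₂ c' p
  -- the boundary `δ` is equivariant:
  δ_sL : ∀ (p x : X) (c : 𝒞.C x), 𝒞.δ (sL₂ p c) = sL p (𝒞.δ c)
  δ_sR : ∀ (p x : X) (c : 𝒞.C x), 𝒞.δ (sR₂ c p) = sR (𝒞.δ c) p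
  -- compatibility with the crossed-module action:  `z.(c^a) = (z.c)^(z.a)`, `(c^a).z = (c.z)^(a.z)`:
  sL₂_act : ∀ (p x y : X) (c : 𝒞.C x) (a : x ⟶ y),
    sL₂ p (𝒞.act c a) = 𝒞.act (sL₂ p c) (sL p a)
  sR₂_act : ∀ (p x y : X) (c : 𝒞.C x) (a : x ⟶ y),
    sR₂ (𝒞.act c a) p = 𝒞.act (sR₂ c p) (sR a p)
  /-- the braiding `{a, b} ∈ A₂ ((β a) * (β b))` -/
  brd : ∀ {x x' y y' : X}, (x ⟶ x') → (y ⟶ y') → 𝒞.C (x' * y')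
  brd_one_left : ∀ (y y' : X) (b : y ⟶ y'), brd (𝟙 (1 : X)) b = 1
  brd_one_right : ∀ (x x' : X) (a : x ⟶ x'), brd a (𝟙 (1 : X)) = 1
  -- `{a, b + b'} = {a, b} ^ (β a . b') + {a, b'}`:
  brd_add_right : ∀ (x x' y y' y'' : X) (a : x ⟶ x') (b : y ⟶ y') (b' : y' ⟶ y''),
    brd a (b ≫ b') = 𝒞.act (brd a b) (sL x' b') * brd a b'
  -- `{a + a', b} = {a', b} + {a, b} ^ (a' . β b)`:
  brd_add_left : ∀ (x x' x'' y y' : X) (a : x ⟶ x') (a' : x' ⟶ x'') (b : y ⟶ y'),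
    brd (a ≫ a') b = brd a' b * 𝒞.act (brd a b) (sR a' y')
  -- `δ {a, b} = -(β a . b) - (a . α b) + (α a . b) + (a . β b)`:
  brd_δ : ∀ (x x' y y' : X) (a : x ⟶ x') (b : y ⟶ y'),
    𝒞.δ (brd a b) =
      Groupoid.inv (sL x' b) ≫ Groupoid.inv (sR a y) ≫ sL x b ≫ sR a y'
  -- `{a, δ c'} = -(β a . c') + (α a . c') ^ (a . y)` for `c' ∈ A₂ y`:
  brd_δ_right : ∀ (x x' y : X) (a : x ⟶ x') (c' : 𝒞.C y),
    brd a (𝒞.δ c') = (sL₂ x' c')⁻¹ * 𝒞.act (sL₂ x c') (sR a y)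
  -- `{δ c, b} = -(c . α b) ^ (x . b) + c . β b` for `c ∈ A₂ x`:
  brd_δ_left : ∀ (x y y' : X) (c : 𝒞.C x) (b : y ⟶ y'),
    brd (𝒞.δ c) b = (𝒞.act (sR₂ c y) (sL x b))⁻¹ * sR₂ c y'
  -- `p.{a, b} = {p.a, b}`, `{a, b}.p = {a, b.p}`, `{a.p, b} = {a, p.b}`:
  brd_sL : ∀ (p x x' y y' : X) (a : x ⟶ x') (b : y ⟶ y'),
    sL₂ p (brd a b) = 𝒞.act (brd (sL p a) b) (eqToHom (mul_assoc p x' y'))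
  brd_sR : ∀ (p x x' y y' : X) (a : x ⟶ x') (b : y ⟶ y'),
    sR₂ (brd a b) p = 𝒞.act (brd a (sR b p)) (eqToHom (mul_assoc x' y' p).symm)
  brd_mid : ∀ (p x x' y y' : X) (a : x ⟶ x') (b : y ⟶ y'),
    brd (sR a p) b = 𝒞.act (brd a (sL p b)) (eqToHom (mul_assoc x' p y').symm)

namespace Braided

variable {X : Type*} [Groupoid X] [Group X] {𝒞 : XMod X}

/-- the costar `K = {a ∈ A₁ : β a = e}` of `A₁` at the identity `e = 1` of `A₀`:
an element is an arrow `a : u ⟶ 1` together with its source `u = α a`. -/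
def K (X : Type*) [Groupoid X] [Group X] : Type _ :=
  Σ u : X, (u ⟶ (1 : X))

/-- the group operation of `K`: the composite (in the composable order) of
`a . (α b)` and `b`; its source is `(α a) * (α b)`, so that `α : K → A₀` is a
homomorphism. -/
def Kop (B : Braided X 𝒞) (k k' : K X) : K X :=
  ⟨k.1 * k'.1, B.sR k.2 k'.1 ≫ eqToHom (one_mul k'.1) ≫ k'.2⟩

/-- the identity `1_e` of `K`. -/
def Kone (X : Type*) [Groupoid X] [Group X] : K X :=
  ⟨1, 𝟙 (1 : X)⟩

/-- the inverse of `k` in the group `K`. -/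
def Kinv (B : Braided X 𝒞) (k : K X) : K X :=
  ⟨k.1⁻¹, eqToHom (one_mul k.1⁻¹).symm ≫ Groupoid.inv (B.sR k.2 k.1⁻¹) ≫
    eqToHom (mul_inv_cancel k.1)⟩

/-- the diagonal (conjugation) action `k ^ p = p⁻¹ . k . p` of `A₀` on `K`. -/
def Kconj (B : Braided X 𝒞) (k : K X) (p : X) : K X :=
  ⟨p⁻¹ * k.1 * p, eqToHom (mul_assoc p⁻¹ k.1 p) ≫ B.sL p⁻¹ (B.sR k.2 p) ≫
    eqToHom (show p⁻¹ * ((1 : X) * p) = 1 by simp)⟩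

/-- the diagonal (conjugation) action `c ^ p = p⁻¹ . c . p` of `A₀` on the
vertex group `A₂(e)`. -/
def Cconj (B : Braided X 𝒞) (c : 𝒞.C (1 : X)) (p : X) : 𝒞.C (1 : X) :=
  𝒞.act (B.sL₂ p⁻¹ (B.sR₂ c p)) (eqToHom (show p⁻¹ * ((1 : X) * p) = 1 by simp))

/-- the action `c ! a = (c . α a) ^ a` of `K` on the vertex group `A₂(e)`. -/
def bang (B : Braided X 𝒞) (c : 𝒞.C (1 : X)) (k : K X) : 𝒞.C (1 : X) :=
  𝒞.act (B.sR₂ c k.1) (eqToHom (one_mul k.1) ≫ k.2)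

/-- the inclusion of the vertex group `A₁(e)` into `K`. -/
def iota (a : (1 : X) ⟶ (1 : X)) : K X := ⟨1, a⟩

end Braided

open Braided

section Helpers

variable {X : Type*} [Groupoid X] [Group X] {𝒞 : XMod X} (B : Braided X 𝒞)

lemma sR_eqToHom {x y : X} (h : x = y) (p : X) :
    B.sR (eqToHom h) p = eqToHom (by rw [h]) := by
  subst h; simp [B.sR_id]

lemma sR_inv' {x y : X} (a : x ⟶ y) (p : X) :
    B.sR (inv a) p = inv (B.sR a p) := by
  have h : B.sR a p ≫ B.sR (inv a) p = 𝟙 _ := by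
    rw [← B.sR_comp]; simp [B.sR_id]
  exact (IsIso.eq_inv_of_hom_inv_id h).symm ▸ rfl

lemma sR_congr {x y : X} (a : x ⟶ y) {p q : X} (h : p = q) :
    B.sR a p = eqToHom (by rw [h]) ≫ B.sR a q ≫ eqToHom (by rw [h]) := by
  subst h; simp

lemma sR_sR_inv (k : K X) :
    B.sR (B.sR k.2 k.1⁻¹) k.1 =
      eqToHom (show k.1 * k.1⁻¹ * k.1 = k.1 by simp) ≫ k.2 ≫
        eqToHom (show (1 : X) = 1 * k.1⁻¹ * k.1 by simp) := by
  have h := B.sR_mul k.1⁻¹ k.1 k.1 1 k.2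
  rw [sR_congr B k.2 (inv_mul_cancel k.1), B.sR_one] at h
  have h2 : B.sR (B.sR k.2 k.1⁻¹) k.1 =
      eqToHom (mul_assoc k.1 k.1⁻¹ k.1) ≫ B.sR k.2 (k.1⁻¹ * k.1) ≫
        eqToHom (mul_assoc 1 k.1⁻¹ k.1).symm := by
    rw [B.sR_mul]; simp [eqToHom_trans]
  rw [h2, sR_congr B k.2 (inv_mul_cancel k.1), B.sR_one]
  simp [eqToHom_trans]

lemma K_ext {k k' : K X} (h1 : k.1 = k'.1) (h2 : k.2 = eqToHom h1 ≫ k'.2) : k = k' := by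
  obtain ⟨u, a⟩ := k; obtain ⟨u', a'⟩ := k'
  dsimp at h1; subst h1
  simp only [eqToHom_refl, Category.id_comp] at h2
  rw [h2]

end Helpers

/-- **Statement 16.** Let `𝒜` be a braided regular crossed module, `K` the costar at
`e` with the group operation of Statement 15.  Then `c ! a = (c . α a) ^ a`
(`c ∈ A₂(e)`, `a ∈ K`) defines a right action of the group `K` on the group `A₂(e)`
by group automorphisms, extending the action of the vertex group `A₁(e) ⊆ K`; the
restriction `δ : A₂(e) → K` is `K`-equivariant (for the conjugation action of `K` on
itself); `c ! δ c' = - c' + c + c'`; hence `δ : A₂(e) → K` is a crossed module of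
groups. -/
theorem bang_crossedModule {X : Type*} [Groupoid X] [Group X] {𝒞 : XMod X}
    (B : Braided X 𝒞) :
    -- `!` is a right action of the group `K` on `A₂(e)` …
    (∀ c : 𝒞.C (1 : X), B.bang c (Kone X) = c) ∧
    (∀ (c : 𝒞.C (1 : X)) (k k' : K X), B.bang c (B.Kop k k') = B.bang (B.bang c k) k') ∧
    -- … by group automorphisms:
    (∀ (c c' : 𝒞.C (1 : X)) (k : K X), B.bang (c * c') k = B.bang c k * B.bang c' k) ∧
    -- it extends the crossed-module action of the vertex group `A₁(e) ⊆ K`: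
    (∀ (c : 𝒞.C (1 : X)) (a : (1 : X) ⟶ (1 : X)), B.bang c ⟨1, a⟩ = 𝒞.act c a) ∧
    -- `δ : A₂(e) → K` is `K`-equivariant:  `δ (c ! k) = k⁻¹ · (δ c) · k` in `K`:
    (∀ (c : 𝒞.C (1 : X)) (k : K X),
      iota (𝒞.δ (B.bang c k)) = B.Kop (B.Kop (B.Kinv k) (iota (𝒞.δ c))) k) ∧
    -- the Peiffer identity `c ! (δ c') = - c' + c + c'`:
    (∀ c c' : 𝒞.C (1 : X), B.bang c (iota (𝒞.δ c')) = c'⁻¹ * c * c') := by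
  refine ⟨?_, ?_, ?_, ?_, ?_, ?_⟩
  · intro c
    simp [Braided.bang, Braided.Kone, B.sR₂_one, ← 𝒞.act_comp, eqToHom_trans, 𝒞.act_id]
    erw [eqToHom_trans, eqToHom_refl, 𝒞.act_id]
  · intro c k k'
    simp only [Braided.bang, Braided.Kop, B.sR₂_mulA, B.sR₂_act, ← 𝒞.act_comp,
      B.sR_comp, sR_eqToHom, eqToHom_trans, eqToHom_trans_assoc, Category.assoc]
    erw [eqToHom_trans_assoc]
  · intro c c' k
    simp [Braided.bang, B.sR₂_mul, 𝒞.act_mul]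
  · intro c a
    simp [Braided.bang, B.sR₂_one, ← 𝒞.act_comp, eqToHom_trans]
  · intro c k
    refine K_ext (by simp [Braided.Kop, Braided.Kinv, Braided.iota]) ?_
    simp only [Braided.bang, Braided.Kop, Braided.Kinv, Braided.iota, 𝒞.δ_act, B.δ_sR,
      Groupoid.inv_eq_inv, IsIso.inv_comp, inv_eqToHom, sR_inv', B.sR_comp, B.sR_one,
      sR_eqToHom, sR_sR_inv, eqToHom_trans, eqToHom_trans_assoc, Category.assoc, eqToHom_refl,
      Category.comp_id, Category.id_comp]
    erw [eqToHom_trans_assoc, eqToHom_refl, Category.id_comp]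
  · intro c c'
    simp [Braided.bang, Braided.iota, B.sR₂_one, ← 𝒞.act_comp, eqToHom_trans, 𝒞.peiffer]
    erw [eqToHom_trans_assoc, eqToHom_refl, Category.id_comp, 𝒞.peiffer]
end
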